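/- Robust constraint satisfaction via duality (necessity): let P = {r ∈ ℝ^N : S r ≤ h} be nonempty, with S ∈ ℝ^{q×N}, h ∈ ℝ^q. Let Σ ∈ ℝ^{m×p}, M ∈ ℝ^{p×N}, v ∈ ℝ^p, σ ∈ ℝ^m. If Σ(M r + v) ≤ σ for all r ∈ P, then there exists Z ∈ ℝ^{q×m} with Z ≥ 0, Zᵀ S = Σ M, and Σ v + Zᵀ h ≤ σ. -/

import Mathlib

open Matrix Finset

section Carath

variable {ι : Type*} [Fintype ι] {E : Type*} [AddCommGroup E] [Module ℝ E]

/-- Conic Carathéodory: any nonnegative combination can be rewritten with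
linearly independent support. -/
lemma cone_carath (a : ι → E) :
    ∀ n (w : ι → ℝ), ((Finset.univ.filter fun i => w i ≠ 0).card = n) → (∀ i, 0 ≤ w i) →
    ∃ (s : Finset ι) (u : ι → ℝ), LinearIndependent ℝ (fun i : s => a (i : ι)) ∧
      (∀ i, 0 ≤ u i) ∧ (∀ i, i ∉ s → u i = 0) ∧ ∑ i, u i • a i = ∑ i, w i • a i := by
  classical
  intro n
  induction n using Nat.strong_induction_on with
  | _ n IH =>
    intro w hcard hw
    set s : Finset ι := Finset.univ.filter fun i => w i ≠ 0 with hs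
    by_cases hli : LinearIndependent ℝ (fun i : s => a (i : ι))
    · exact ⟨s, w, hli, hw, fun i hi => by
        simpa [hs, Finset.mem_filter, not_not] using hi, rfl⟩
    · obtain ⟨g, hg0, i₁, hi₁⟩ := Fintype.not_linearIndependent_iff.mp hli
      -- extend g to ι
      set c : ι → ℝ := fun i => if h : i ∈ s then g ⟨i, h⟩ else 0 with hc
      have hcsum : ∑ i, c i • a i = 0 := by
        rw [← Finset.sum_filter_of_ne (p := fun i => i ∈ s)
          (by intro i _ hne; by_contra hmem; simp [hc, hmem] at hne)]
        rw [show (Finset.univ.filter fun i => i ∈ s) = s by simp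
          , ← Finset.sum_attach s fun i => c i • a i]
        simpa [hc] using hg0
      have hcsupp : ∀ i, i ∉ s → c i = 0 := fun i hi => by simp [hc, hi]
      -- wlog: some c i is positive
      have key : ∀ c : ι → ℝ, (∑ i, c i • a i = 0) → (∀ i, i ∉ s → c i = 0) →
          (∃ i, 0 < c i) →
          ∃ (s' : Finset ι) (u : ι → ℝ), LinearIndependent ℝ (fun i : s' => a (i : ι)) ∧
            (∀ i, 0 ≤ u i) ∧ (∀ i, i ∉ s' → u i = 0) ∧ ∑ i, u i • a i = ∑ i, w i • a i := by
        intro c hcsum hcsupp ⟨j, hj⟩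
        set T : Finset ι := Finset.univ.filter fun i => 0 < c i with hT
        have hTne : T.Nonempty := ⟨j, by simp [hT, hj]⟩
        obtain ⟨i₀, hi₀T, hi₀min⟩ := T.exists_min_image (fun i => w i / c i) hTne
        have hci₀ : 0 < c i₀ := by simpa [hT] using hi₀T
        set t : ℝ := w i₀ / c i₀ with ht
        have ht0 : 0 ≤ t := div_nonneg (hw i₀) hci₀.le
        set w' : ι → ℝ := fun i => w i - t * c i with hw'
        have hw'0 : ∀ i, 0 ≤ w' i := by
          intro i
          rcases le_or_gt (c i) 0 with h1 | h1
          · have : t * c i ≤ 0 := mul_nonpos_of_nonneg_of_nonpos ht0 h1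
            simp only [hw']; linarith [hw i]
          · have hiT : i ∈ T := by simp [hT, h1]
            have h2 : t * c i ≤ w i := by
              rw [ht, div_mul_eq_mul_div, div_le_iff₀ hci₀]
              have h3 := hi₀min i hiT
              rw [ht, div_le_div_iff₀ hci₀ h1] at h3
              exact h3
            simp only [hw']; linarith
        have hw'i₀ : w' i₀ = 0 := by
          simp only [hw', ht]
          rw [div_mul_cancel₀ _ (ne_of_gt hci₀), sub_self]
        have hsupp' : (Finset.univ.filter fun i => w' i ≠ 0) ⊆ s.erase i₀ := by
          intro i hi
          simp only [Finset.mem_filter, Finset.mem_univ, true_and] at hi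
          rw [Finset.mem_erase]
          constructor
          · rintro rfl; exact hi hw'i₀
          · by_contra hmem
            exact hi (by simp [hw', hmem, hcsupp i hmem,
              show w i = 0 by simpa [hs, not_not] using hmem])
        have hi₀s : i₀ ∈ s := by
          by_contra hmem
          exact absurd (hcsupp i₀ hmem) (ne_of_gt hci₀)
        have hlt : (Finset.univ.filter fun i => w' i ≠ 0).card < n := by
          calc (Finset.univ.filter fun i => w' i ≠ 0).card ≤ (s.erase i₀).card :=
                Finset.card_le_card hsupp'
            _ < s.card := Finset.card_erase_lt_of_mem hi₀s
            _ = n := hcard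
        have hsum' : ∑ i, w' i • a i = ∑ i, w i • a i := by
          have step : ∀ i, w' i • a i = w i • a i - t • (c i • a i) := by
            intro i; simp only [hw', sub_smul, smul_smul]
          simp only [step, Finset.sum_sub_distrib, ← Finset.smul_sum, hcsum,
            smul_zero, sub_zero]
        obtain ⟨s', u, h1, h2, h3, h4⟩ := IH _ hlt w' rfl hw'0
        exact ⟨s', u, h1, h2, h3, h4.trans hsum'⟩
      rcases Classical.em (∃ i, 0 < c i) with hpos | hpos
      · exact key c hcsum hcsupp hpos
      · have hci₁ : c (↑i₁ : ι) = g i₁ := by simp [hc]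
        have hne : c (↑i₁ : ι) ≠ 0 := by rw [hci₁]; exact hi₁
        have : ∃ i, 0 < (-c) i := by
          push_neg at hpos
          refine ⟨(↑i₁ : ι), ?_⟩
          have h1 := hpos (↑i₁ : ι)
          simp only [Pi.neg_apply]
          rcases lt_or_eq_of_le h1 with h | h
          · linarith
          · exact absurd h hne
        refine key (-c) ?_ (fun i hi => by simp [hcsupp i hi]) this
        rw [← neg_zero, ← hcsum, ← Finset.sum_neg_distrib]
        exact Finset.sum_congr rfl fun i _ => by simp [neg_smul]

end Carath

section Closed

variable {ι : Type*} [Fintype ι] {E : Type*} [NormedAddCommGroup E]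
  [InnerProductSpace ℝ E] [CompleteSpace E]

/-- The cone generated by finitely many vectors. -/
def coneSet (a : ι → E) : Set E :=
  {x | ∃ w : ι → ℝ, (∀ i, 0 ≤ w i) ∧ x = ∑ i, w i • a i}

/-- Linear map sending coefficients supported on `s` to the corresponding combination. -/
def coneMap (a : ι → E) (s : Finset ι) : ((i : s) → ℝ) →ₗ[ℝ] E where
  toFun w := ∑ i : s, w i • a (i : ι)
  map_add' u v := by simp [add_smul, Finset.sum_add_distrib]
  map_smul' c u := by simp [smul_smul, Finset.smul_sum]

lemma isClosed_coneSet (a : ι → E) : IsClosed (coneSet a) := by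
  classical
  have key : coneSet a = ⋃ s : {s : Finset ι // LinearIndependent ℝ (fun i : s => a (i : ι))},
      coneMap a (s : Finset ι) '' {w | ∀ i, 0 ≤ w i} := by
    ext x
    simp only [Set.mem_iUnion, Set.mem_image, Set.mem_setOf_eq]
    constructor
    · rintro ⟨w, hw, rfl⟩
      obtain ⟨s, u, hli, hu0, husupp, husum⟩ := cone_carath a _ w rfl hw
      refine ⟨⟨s, hli⟩, fun i => u (i : ι), fun i => hu0 _, ?_⟩
      show ∑ i : s, u (i : ι) • a (i : ι) = _
      rw [Finset.sum_coe_sort s (fun i => u i • a i),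
        Finset.sum_subset (Finset.subset_univ s)
        (fun i _ hi => by rw [husupp i hi, zero_smul])]
      exact husum
    · rintro ⟨s, w, hw, rfl⟩
      refine ⟨fun i => if h : i ∈ (s : Finset ι) then w ⟨i, h⟩ else 0, fun i => ?_, ?_⟩
      · dsimp only
        split
        · exact hw _
        · exact le_rfl
      · have h1 : ∑ i : ι, (if h : i ∈ (s : Finset ι) then w ⟨i, h⟩ else 0) • a i
            = ∑ i ∈ (s : Finset ι), (if h : i ∈ (s : Finset ι) then w ⟨i, h⟩ else 0) • a i :=
          (Finset.sum_subset (Finset.subset_univ _) (fun i _ hi => by simp [hi])).symm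
        have h2 : ∑ i ∈ (s : Finset ι), (if h : i ∈ (s : Finset ι) then w ⟨i, h⟩ else 0) • a i
            = ∑ i : (s : Finset ι), w i • a (i : ι) := by
          rw [← Finset.sum_coe_sort (s : Finset ι)
            (fun i => (if h : i ∈ (s : Finset ι) then w ⟨i, h⟩ else 0) • a i)]
          exact Finset.sum_congr rfl fun i _ => by simp [i.2]
        show ∑ i : (s : Finset ι), w i • a (i : ι) = _
        rw [h1, h2]
  rw [key]
  refine isClosed_iUnion_of_finite fun s => ?_
  have hker : LinearMap.ker (coneMap a (s : Finset ι)) = ⊥ := by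
    rw [LinearMap.ker_eq_bot']
    intro w hw
    exact funext (Fintype.linearIndependent_iff.mp s.2 w hw)
  have hclosed : IsClosed {w : ((s : Finset ι) : Type _) → ℝ | ∀ i, 0 ≤ w i} := by
    have : {w : ((s : Finset ι) : Type _) → ℝ | ∀ i, 0 ≤ w i} = ⋂ i, {w | 0 ≤ w i} := by
      ext; simp [Set.mem_iInter]
    rw [this]
    exact isClosed_iInter fun i => isClosed_le continuous_const (continuous_apply i)
  exact ((coneMap a (s : Finset ι)).isClosedEmbedding_of_injective hker).isClosedMap _ hclosed

end Closed

section Farkas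

open scoped InnerProductSpace

variable {ι : Type*} [Fintype ι] {E : Type*} [NormedAddCommGroup E]
  [InnerProductSpace ℝ E] [CompleteSpace E]

lemma farkas_homog (a : ι → E) (b : E)
    (hb : ∀ y : E, (∀ i, ⟪a i, y⟫_ℝ ≤ 0) → ⟪b, y⟫_ℝ ≤ 0) :
    ∃ w : ι → ℝ, (∀ i, 0 ≤ w i) ∧ b = ∑ i, w i • a i := by
  classical
  by_contra hcon
  have hbK : b ∉ coneSet a := fun ⟨w, hw, hbw⟩ => hcon ⟨w, hw, hbw⟩
  -- coneSet as a ConvexCone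
  let K : ConvexCone ℝ E :=
    { carrier := coneSet a
      smul_mem' := by
        rintro c hc x ⟨w, hw, rfl⟩
        exact ⟨fun i => c * w i, fun i => mul_nonneg hc.le (hw i), by
          rw [Finset.smul_sum]; exact Finset.sum_congr rfl fun i _ => smul_smul c (w i) (a i)⟩
      add_mem' := by
        rintro x ⟨w, hw, rfl⟩ y ⟨u, hu, rfl⟩
        exact ⟨w + u, fun i => add_nonneg (hw i) (hu i), by
          simp [add_smul, Finset.sum_add_distrib]⟩ }
  have hKne : (K : Set E).Nonempty := ⟨0, ⟨fun _ => 0, fun i => le_rfl, by simp⟩⟩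
  have hKcl : IsClosed (K : Set E) := isClosed_coneSet a
  obtain ⟨y, hy1, hy2⟩ : ∃ y, (∀ x ∈ K, 0 ≤ ⟪x, y⟫_ℝ) ∧ ⟪y, b⟫_ℝ < 0 := by
    let C : ProperCone ℝ E :=
      { carrier := coneSet a
        zero_mem' := ⟨fun _ => 0, fun i => le_rfl, by simp⟩
        add_mem' := fun hx hy => K.add_mem' hx hy
        smul_mem' := by
          rintro c x ⟨w, hw, rfl⟩
          exact ⟨fun i => (c : ℝ) * w i, fun i => mul_nonneg c.2 (hw i), by
            rw [Finset.smul_sum]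
            exact Finset.sum_congr rfl fun i _ => smul_smul (c : ℝ) (w i) (a i)⟩
        isClosed' := hKcl }
    obtain ⟨y, hy1, hy2⟩ := ProperCone.hyperplane_separation' C (x₀ := b) hbK
    exact ⟨y, hy1, by rw [real_inner_comm]; exact hy2⟩
  have hay : ∀ i, ⟪a i, -y⟫_ℝ ≤ 0 := by
    intro i
    have hai : a i ∈ K := ⟨fun j => if j = i then 1 else 0, fun j => by positivity, by
      simp [ite_smul]⟩
    have := hy1 _ hai
    rw [inner_neg_right]
    linarith
  have := hb (-y) hay
  rw [inner_neg_right] at this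
  rw [real_inner_comm] at hy2
  linarith

end Farkas

section Affine

open scoped InnerProductSpace

lemma farkas_affine {q N : ℕ} (S : Matrix (Fin q) (Fin N) ℝ) (h : Fin q → ℝ)
    (hne : ∃ r : Fin N → ℝ, S.mulVec r ≤ h) (c : Fin N → ℝ) (d : ℝ)
    (hub : ∀ r : Fin N → ℝ, S.mulVec r ≤ h → c ⬝ᵥ r ≤ d) :
    ∃ z : Fin q → ℝ, (∀ i, 0 ≤ z i) ∧ S.vecMul z = c ∧ h ⬝ᵥ z ≤ d := by
  classical
  set E := EuclideanSpace ℝ (Fin N ⊕ Unit) with hE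
  let emb : ((Fin N ⊕ Unit) → ℝ) → E := (WithLp.equiv 2 _).symm
  let a : Fin q ⊕ Unit → E := Sum.elim
    (fun i => emb (Sum.elim (fun j => S i j) (fun _ => -h i)))
    (fun _ => emb (Sum.elim (fun _ => 0) (fun _ => -1)))
  let b : E := emb (Sum.elim c (fun _ => -d))
  have hemb : ∀ (u : (Fin N ⊕ Unit) → ℝ) (k), emb u k = u k := fun u k => rfl
  have hinner : ∀ (u : (Fin N ⊕ Unit) → ℝ) (y : E),
      ⟪emb u, y⟫_ℝ = (∑ j, u (Sum.inl j) * y (Sum.inl j)) + u (Sum.inr ()) * y (Sum.inr ()) := by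
    intro u y
    rw [PiLp.inner_apply, Fintype.sum_sum_type]
    simp [hemb, RCLike.inner_apply, mul_comm]
  have hb : ∀ y : E, (∀ i, ⟪a i, y⟫_ℝ ≤ 0) → ⟪b, y⟫_ℝ ≤ 0 := by
    intro y hy
    set r : Fin N → ℝ := fun j => y (Sum.inl j) with hr
    set t : ℝ := y (Sum.inr ()) with htdef
    have hS : ∀ i, S.mulVec r i ≤ h i * t := by
      intro i
      have := hy (Sum.inl i)
      rw [show a (Sum.inl i) = emb (Sum.elim (fun j => S i j) (fun _ => -h i)) from rfl,
        hinner] at this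
      simp only [Sum.elim_inl, Sum.elim_inr] at this
      have : (∑ j, S i j * r j) + -h i * t ≤ 0 := this
      rw [Matrix.mulVec, dotProduct]
      linarith
    have ht : 0 ≤ t := by
      have := hy (Sum.inr ())
      rw [show a (Sum.inr ()) = emb (Sum.elim (fun _ => 0) (fun _ => -1)) from rfl,
        hinner] at this
      simp only [Sum.elim_inl, Sum.elim_inr] at this
      simp at this
      linarith
    have hgoal : c ⬝ᵥ r ≤ d * t := by
      rcases eq_or_lt_of_le ht with ht0 | ht0
      · -- t = 0
        obtain ⟨r₀, hr₀⟩ := hne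
        by_contra hlt
        push_neg at hlt
        rw [← ht0, mul_zero] at hlt
        set lam : ℝ := max 0 ((d - c ⬝ᵥ r₀) / (c ⬝ᵥ r)) + 1 with hlam
        have hlam0 : 0 ≤ lam := by positivity
        have hfeas2 : S.mulVec (r₀ + lam • r) ≤ h := by
          intro i
          rw [Matrix.mulVec_add, Matrix.mulVec_smul]
          have h1 := hS i
          rw [← ht0, mul_zero] at h1
          have : lam * S.mulVec r i ≤ 0 := mul_nonpos_of_nonneg_of_nonpos hlam0 h1
          have h2 := hr₀ i
          simp only [Pi.add_apply, Pi.smul_apply, smul_eq_mul]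
          linarith
        have h3 := hub _ hfeas2
        rw [dotProduct_add, dotProduct_smul] at h3
        have h4 : (d - c ⬝ᵥ r₀) / (c ⬝ᵥ r) ≤ lam - 1 := by
          rw [hlam]; simp
        have h5 : d - c ⬝ᵥ r₀ ≤ (lam - 1) * (c ⬝ᵥ r) := (div_le_iff₀ hlt).mp h4
        rw [smul_eq_mul] at h3
        nlinarith
      · -- t > 0
        have hfeas2 : S.mulVec (t⁻¹ • r) ≤ h := by
          intro i
          rw [Matrix.mulVec_smul]
          have := hS i
          simp only [Pi.smul_apply, smul_eq_mul]
          rw [inv_mul_le_iff₀ ht0]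
          linarith [this]
        have h3 := hub _ hfeas2
        rw [dotProduct_smul] at h3
        have : t⁻¹ * (c ⬝ᵥ r) ≤ d := h3
        rw [inv_mul_le_iff₀ ht0] at this
        linarith
    rw [show b = emb (Sum.elim c (fun _ => -d)) from rfl, hinner]
    simp only [Sum.elim_inl, Sum.elim_inr]
    have : (∑ j, c j * r j) = c ⬝ᵥ r := rfl
    rw [this]
    linarith
  obtain ⟨w, hw0, hwsum⟩ := farkas_homog a b hb
  refine ⟨fun i => w (Sum.inl i), fun i => hw0 _, ?_, ?_⟩
  · funext j
    have := congrArg (EuclideanSpace.proj (𝕜 := ℝ) (Sum.inl j : Fin N ⊕ Unit)) hwsum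
    rw [map_sum] at this
    simp only [_root_.map_smul] at this
    rw [show (EuclideanSpace.proj (𝕜 := ℝ) (Sum.inl j : Fin N ⊕ Unit)) b = c j from rfl] at this
    rw [Fintype.sum_sum_type] at this
    simp only [smul_eq_mul] at this
    rw [Matrix.vecMul, dotProduct]
    rw [this]
    simp only [Finset.sum_const, Finset.card_univ, Fintype.univ_punit]
    have ha1 : ∀ i, (EuclideanSpace.proj (𝕜 := ℝ) (Sum.inl j : Fin N ⊕ Unit)) (a (Sum.inl i))
        = S i j := fun i => rfl
    have ha2 : ∀ u : Unit, (EuclideanSpace.proj (𝕜 := ℝ) (Sum.inl j : Fin N ⊕ Unit))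
        (a (Sum.inr u)) = 0 := fun u => rfl
    simp only [ha1, ha2, mul_zero, Finset.sum_const_zero, add_zero]
  · have := congrArg (EuclideanSpace.proj (𝕜 := ℝ) (Sum.inr () : Fin N ⊕ Unit)) hwsum
    rw [map_sum] at this
    simp only [_root_.map_smul] at this
    rw [show (EuclideanSpace.proj (𝕜 := ℝ) (Sum.inr () : Fin N ⊕ Unit)) b = -d from rfl] at this
    rw [Fintype.sum_sum_type] at this
    simp only [smul_eq_mul] at this
    have ha1 : ∀ i, (EuclideanSpace.proj (𝕜 := ℝ) (Sum.inr () : Fin N ⊕ Unit)) (a (Sum.inl i))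
        = -h i := fun i => rfl
    have ha2 : ∀ u : Unit, (EuclideanSpace.proj (𝕜 := ℝ) (Sum.inr () : Fin N ⊕ Unit))
        (a (Sum.inr u)) = -1 := fun u => rfl
    simp only [ha1, ha2] at this
    have hwin : 0 ≤ w (Sum.inr ()) := hw0 _
    have hsum : ∑ u : Unit, w (Sum.inr u) * (-1) = -(w (Sum.inr ())) := by simp
    rw [hsum] at this
    rw [dotProduct]
    have : d = (∑ i, w (Sum.inl i) * h i) + w (Sum.inr ()) := by
      have := this
      have h2 : ∑ i, w (Sum.inl i) * (-h i) = -(∑ i, w (Sum.inl i) * h i) := by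
        rw [← Finset.sum_neg_distrib]
        exact Finset.sum_congr rfl fun i _ => by ring
      rw [h2] at this
      linarith
    rw [this]
    have h3 : ∑ i, h i * w (Sum.inl i) = ∑ i, w (Sum.inl i) * h i :=
      Finset.sum_congr rfl fun i _ => by ring
    rw [h3]
    linarith

end Affine

theorem robust_constraint_duality_necessity
    (N q m p : ℕ)
    (S : Matrix (Fin q) (Fin N) ℝ) (h : Fin q → ℝ)
    (hne : ∃ r : Fin N → ℝ, S.mulVec r ≤ h)
    (Sig : Matrix (Fin m) (Fin p) ℝ)
    (M : Matrix (Fin p) (Fin N) ℝ) (v : Fin p → ℝ) (sig : Fin m → ℝ)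
    (hfeas : ∀ r : Fin N → ℝ, S.mulVec r ≤ h → Sig.mulVec (M.mulVec r + v) ≤ sig) :
    ∃ Z : Matrix (Fin q) (Fin m) ℝ,
      (∀ i j, 0 ≤ Z i j) ∧ Zᵀ * S = Sig * M ∧
      Sig.mulVec v + Zᵀ.mulVec h ≤ sig := by
  have key : ∀ i : Fin m, ∃ z : Fin q → ℝ, (∀ k, 0 ≤ z k) ∧
      S.vecMul z = (Sig * M) i ∧ h ⬝ᵥ z ≤ sig i - Sig.mulVec v i := by
    intro i
    refine farkas_affine S h hne ((Sig * M) i) (sig i - Sig.mulVec v i) ?_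
    intro r hr
    have := hfeas r hr i
    rw [Matrix.mulVec_add, Matrix.mulVec_mulVec] at this
    have h1 : (Sig * M).mulVec r i = (Sig * M) i ⬝ᵥ r := rfl
    simp only [Pi.add_apply] at this
    rw [h1] at this
    linarith
  choose z hz using key
  refine ⟨Matrix.of fun j i => z i j, fun j i => (hz i).1 j, ?_, ?_⟩
  · ext i j
    have := congrFun (hz i).2.1 j
    rw [Matrix.vecMul, dotProduct] at this
    rw [← this]
    rw [Matrix.mul_apply]
    rfl
  · intro i
    have h2 := (hz i).2.2
    have h3 : (Matrix.of fun j i => z i j)ᵀ.mulVec h i = h ⬝ᵥ z i := by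
      rw [Matrix.mulVec, dotProduct, dotProduct]
      exact Finset.sum_congr rfl fun k _ => by rw [mul_comm]; rfl
    simp only [Pi.add_apply]
    rw [h3]
    linarith
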